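/- arXiv:0805.3552 — 3 statements merged into one kernel-verified Lean document; each statement's English description precedes it below -/
import Mathlib

section
/- Let μ be a measure on M and A, B, C measurable sets with μ(A Δ B) < ∞ and μ(B Δ C) < ∞. Then μ(A Δ C) < ∞ and J(A,B) + J(B,C) = J(A,C), where J(X,Y) = μ(X \ Y) - μ(Y \ X) (as real numbers). -/
open MeasureTheory

theorem stmt3 {M : Type*} [MeasurableSpace M] (μ : MeasureTheory.Measure M)
    (A B C : Set M) (hA : MeasurableSet A) (hB : MeasurableSet B) (hC : MeasurableSet C)
    (hAB : μ ((A \ B) ∪ (B \ A)) < ⊤) (hBC : μ ((B \ C) ∪ (C \ B)) < ⊤) :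
    μ ((A \ C) ∪ (C \ A)) < ⊤ ∧
      ((μ (A \ B)).toReal - (μ (B \ A)).toReal) +
        ((μ (B \ C)).toReal - (μ (C \ B)).toReal) =
      (μ (A \ C)).toReal - (μ (C \ A)).toReal := by
  have h1 : μ (A \ B) < ⊤ :=
    lt_of_le_of_lt (measure_mono Set.subset_union_left) hAB
  have h2 : μ (B \ A) < ⊤ :=
    lt_of_le_of_lt (measure_mono Set.subset_union_right) hAB
  have h3 : μ (B \ C) < ⊤ :=
    lt_of_le_of_lt (measure_mono Set.subset_union_left) hBC
  have h4 : μ (C \ B) < ⊤ :=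
    lt_of_le_of_lt (measure_mono Set.subset_union_right) hBC
  have sAC : A \ C ⊆ (A \ B) ∪ (B \ C) := by
    intro x hx
    by_cases hxB : x ∈ B
    · exact Or.inr ⟨hxB, hx.2⟩
    · exact Or.inl ⟨hx.1, hxB⟩
  have sCA : C \ A ⊆ (C \ B) ∪ (B \ A) := by
    intro x hx
    by_cases hxB : x ∈ B
    · exact Or.inr ⟨hxB, hx.2⟩
    · exact Or.inl ⟨hx.1, hxB⟩
  have h5 : μ (A \ C) < ⊤ :=
    lt_of_le_of_lt (le_trans (measure_mono sAC) (measure_union_le _ _))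
      (ENNReal.add_lt_top.mpr ⟨h1, h3⟩)
  have h6 : μ (C \ A) < ⊤ :=
    lt_of_le_of_lt (le_trans (measure_mono sCA) (measure_union_le _ _))
      (ENNReal.add_lt_top.mpr ⟨h4, h2⟩)
  have hfin : μ ((A \ C) ∪ (C \ A)) < ⊤ :=
    lt_of_le_of_lt (measure_union_le _ _) (ENNReal.add_lt_top.mpr ⟨h5, h6⟩)
  refine ⟨hfin, ?_⟩
  have key : μ (A \ B) + μ (B \ C) + μ (C \ A) = μ (B \ A) + μ (C \ B) + μ (A \ C) := by
    have e : ∀ (X Y : Set M), MeasurableSet X → MeasurableSet Y →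
        μ (X \ Y) = ∫⁻ x, (X \ Y).indicator (fun _ => (1 : ENNReal)) x ∂μ := by
      intro X Y hX hY
      exact (lintegral_indicator_one (hX.diff hY)).symm
    rw [e A B hA hB, e B C hB hC, e C A hC hA, e B A hB hA, e C B hC hB, e A C hA hC,
      ← lintegral_add_left (Measurable.indicator measurable_const (hA.diff hB)),
      ← lintegral_add_left (f := fun a =>
          (A \ B).indicator (fun _ => (1 : ENNReal)) a + (B \ C).indicator (fun _ => 1) a)
        (((Measurable.indicator measurable_const (hA.diff hB)).add
        (Measurable.indicator measurable_const (hB.diff hC)))),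
      ← lintegral_add_left (Measurable.indicator measurable_const (hB.diff hA)),
      ← lintegral_add_left (f := fun a =>
          (B \ A).indicator (fun _ => (1 : ENNReal)) a + (C \ B).indicator (fun _ => 1) a)
        (((Measurable.indicator measurable_const (hB.diff hA)).add
        (Measurable.indicator measurable_const (hC.diff hB))))]
    apply lintegral_congr
    intro x
    by_cases ha : x ∈ A <;> by_cases hb : x ∈ B <;> by_cases hc : x ∈ C <;>
      simp [Set.indicator, Set.mem_diff, ha, hb, hc]
  have tkey := congrArg ENNReal.toReal key
  rw [ENNReal.toReal_add (ENNReal.add_ne_top.mpr ⟨h1.ne, h3.ne⟩) h6.ne,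
    ENNReal.toReal_add h1.ne h3.ne,
    ENNReal.toReal_add (ENNReal.add_ne_top.mpr ⟨h2.ne, h4.ne⟩) h5.ne,
    ENNReal.toReal_add h2.ne h4.ne] at tkey
  linarith
end

section
/- Let μ be a measure on M and g, h two measure-preserving measurable bijections of (M, μ). Let A be measurable with μ(A Δ g(A)) < ∞ and μ(A Δ h(A)) < ∞. Then μ(A Δ (g∘h)(A)) < ∞ and J(A, (g∘h)(A)) = J(A, g(A)) + J(A, h(A)), where J(X,Y) = μ(X \ Y) - μ(Y \ X). (Homomorphism property of the end charge.) -/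
open MeasureTheory Set

lemma img_meas {M : Type*} [MeasurableSpace M] (g : M ≃ᵐ M) {S : Set M}
    (hS : MeasurableSet S) : MeasurableSet (⇑g '' S) := by
  rw [MeasurableEquiv.image_eq_preimage_symm]
  exact g.symm.measurable hS

lemma img_measure {M : Type*} [MeasurableSpace M] {μ : Measure M} (g : M ≃ᵐ M)
    (hg : Measure.map g μ = μ) {S : Set M} (hS : MeasurableSet S) :
    μ (⇑g '' S) = μ S := by
  have hsymm : Measure.map g.symm μ = μ := by
    have := congrArg (Measure.map (⇑g.symm)) hg
    rw [Measure.map_map g.symm.measurable g.measurable,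
      MeasurableEquiv.symm_comp_self, Measure.map_id] at this
    exact this.symm
  rw [MeasurableEquiv.image_eq_preimage_symm,
    ← Measure.map_apply g.symm.measurable hS, hsymm]

lemma Jcocycle {M : Type*} [MeasurableSpace M] (μ : Measure M) {X Y Z : Set M}
    (hX : MeasurableSet X) (hY : MeasurableSet Y) (hZ : MeasurableSet Z)
    (h1 : μ ((X \ Y) ∪ (Y \ X)) < ⊤) (h2 : μ ((Y \ Z) ∪ (Z \ Y)) < ⊤) :
    μ ((X \ Z) ∪ (Z \ X)) < ⊤ ∧
      (μ (X \ Z)).toReal - (μ (Z \ X)).toReal =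
        ((μ (X \ Y)).toReal - (μ (Y \ X)).toReal) +
          ((μ (Y \ Z)).toReal - (μ (Z \ Y)).toReal) := by
  have fXY : μ (X \ Y) < ⊤ := lt_of_le_of_lt (measure_mono subset_union_left) h1
  have fYX : μ (Y \ X) < ⊤ := lt_of_le_of_lt (measure_mono subset_union_right) h1
  have fYZ : μ (Y \ Z) < ⊤ := lt_of_le_of_lt (measure_mono subset_union_left) h2
  have fZY : μ (Z \ Y) < ⊤ := lt_of_le_of_lt (measure_mono subset_union_right) h2
  have hfin : μ ((X \ Z) ∪ (Z \ X)) < ⊤ := by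
    have hsub : (X \ Z) ∪ (Z \ X) ⊆ ((X \ Y) ∪ (Y \ Z)) ∪ ((Z \ Y) ∪ (Y \ X)) := by
      intro x hx
      simp only [mem_union, mem_diff] at hx ⊢
      tauto
    calc μ ((X \ Z) ∪ (Z \ X)) ≤ μ (((X \ Y) ∪ (Y \ Z)) ∪ ((Z \ Y) ∪ (Y \ X))) :=
          measure_mono hsub
      _ ≤ (μ (X \ Y) + μ (Y \ Z)) + (μ (Z \ Y) + μ (Y \ X)) :=
          le_trans (measure_union_le _ _)
            (add_le_add (measure_union_le _ _) (measure_union_le _ _))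
      _ < ⊤ := by
          exact ENNReal.add_lt_top.2 ⟨ENNReal.add_lt_top.2 ⟨fXY, fYZ⟩,
            ENNReal.add_lt_top.2 ⟨fZY, fYX⟩⟩
  refine ⟨hfin, ?_⟩
  -- atoms
  have ha : MeasurableSet ((X \ Y) \ Z) := (hX.diff hY).diff hZ
  have hb : MeasurableSet ((Y \ X) \ Z) := (hY.diff hX).diff hZ
  have hc : MeasurableSet ((Z \ Y) \ X) := (hZ.diff hY).diff hX
  have hd : MeasurableSet ((X ∩ Y) \ Z) := (hX.inter hY).diff hZ
  have he : MeasurableSet ((X ∩ Z) \ Y) := (hX.inter hZ).diff hY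
  have hf : MeasurableSet ((Y ∩ Z) \ X) := (hY.inter hZ).diff hX
  have fa : μ ((X \ Y) \ Z) ≠ ⊤ :=
    (lt_of_le_of_lt (measure_mono (fun x hx => hx.1)) fXY).ne
  have fb : μ ((Y \ X) \ Z) ≠ ⊤ :=
    (lt_of_le_of_lt (measure_mono (fun x hx => hx.1)) fYX).ne
  have fc : μ ((Z \ Y) \ X) ≠ ⊤ :=
    (lt_of_le_of_lt (measure_mono (fun x hx => hx.1)) fZY).ne
  have fd : μ ((X ∩ Y) \ Z) ≠ ⊤ :=
    (lt_of_le_of_lt (measure_mono (fun x hx => show _ ∈ _ \ _ from ⟨hx.1.2, hx.2⟩)) fYZ).ne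
  have fe : μ ((X ∩ Z) \ Y) ≠ ⊤ :=
    (lt_of_le_of_lt (measure_mono (fun x hx => show _ ∈ _ \ _ from ⟨hx.1.1, hx.2⟩)) fXY).ne
  have ff : μ ((Y ∩ Z) \ X) ≠ ⊤ :=
    (lt_of_le_of_lt (measure_mono (fun x hx => show _ ∈ _ \ _ from ⟨hx.1.1, hx.2⟩)) fYX).ne
  have split : ∀ (S T : Set M), Disjoint S T → MeasurableSet T → μ S ≠ ⊤ → μ T ≠ ⊤ →
      ∀ U, U = S ∪ T → (μ U).toReal = (μ S).toReal + (μ T).toReal := by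
    intro S T hdisj hT hS' hT' U hU
    rw [hU, measure_union hdisj hT, ENNReal.toReal_add hS' hT']
  have e1 : (μ (X \ Z)).toReal = (μ ((X \ Y) \ Z)).toReal + (μ ((X ∩ Y) \ Z)).toReal := by
    refine split _ _ ?_ hd fa fd _ ?_
    · rw [disjoint_left]; rintro x ⟨⟨_, hxy⟩, _⟩ ⟨⟨_, hxy'⟩, _⟩; exact hxy hxy'
    · ext x; simp only [mem_union, mem_diff, mem_inter_iff]; tauto
  have e2 : (μ (Z \ X)).toReal = (μ ((Z \ Y) \ X)).toReal + (μ ((Y ∩ Z) \ X)).toReal := by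
    refine split _ _ ?_ hf fc ff _ ?_
    · rw [disjoint_left]; rintro x ⟨⟨_, hxy⟩, _⟩ ⟨⟨hxy', _⟩, _⟩; exact hxy hxy'
    · ext x; simp only [mem_union, mem_diff, mem_inter_iff]; tauto
  have e3 : (μ (X \ Y)).toReal = (μ ((X \ Y) \ Z)).toReal + (μ ((X ∩ Z) \ Y)).toReal := by
    refine split _ _ ?_ he fa fe _ ?_
    · rw [disjoint_left]; rintro x ⟨⟨_, _⟩, hxz⟩ ⟨⟨_, hxz'⟩, _⟩; exact hxz hxz'
    · ext x; simp only [mem_union, mem_diff, mem_inter_iff]; tauto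
  have e4 : (μ (Y \ X)).toReal = (μ ((Y \ X) \ Z)).toReal + (μ ((Y ∩ Z) \ X)).toReal := by
    refine split _ _ ?_ hf fb ff _ ?_
    · rw [disjoint_left]; rintro x ⟨⟨_, _⟩, hxz⟩ ⟨⟨_, hxz'⟩, _⟩; exact hxz hxz'
    · ext x; simp only [mem_union, mem_diff, mem_inter_iff]; tauto
  have e5 : (μ (Y \ Z)).toReal = (μ ((Y \ X) \ Z)).toReal + (μ ((X ∩ Y) \ Z)).toReal := by
    refine split _ _ ?_ hd fb fd _ ?_
    · rw [disjoint_left]; rintro x ⟨⟨_, hxx⟩, _⟩ ⟨⟨hxx', _⟩, _⟩; exact hxx hxx'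
    · ext x; simp only [mem_union, mem_diff, mem_inter_iff]; tauto
  have e6 : (μ (Z \ Y)).toReal = (μ ((Z \ Y) \ X)).toReal + (μ ((X ∩ Z) \ Y)).toReal := by
    refine split _ _ ?_ he fc fe _ ?_
    · rw [disjoint_left]; rintro x ⟨⟨_, _⟩, hxx⟩ ⟨⟨hxx', _⟩, _⟩; exact hxx hxx'
    · ext x; simp only [mem_union, mem_diff, mem_inter_iff]; tauto
  rw [e1, e2, e3, e4, e5, e6]; ring

theorem stmt8 {M : Type*} [MeasurableSpace M] (μ : MeasureTheory.Measure M)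
    (g h : M ≃ᵐ M) (hg : MeasureTheory.Measure.map g μ = μ)
    (hh : MeasureTheory.Measure.map h μ = μ)
    (A : Set M) (hA : MeasurableSet A)
    (hgA : μ ((A \ (⇑g '' A)) ∪ ((⇑g '' A) \ A)) < ⊤)
    (hhA : μ ((A \ (⇑h '' A)) ∪ ((⇑h '' A) \ A)) < ⊤) :
    μ ((A \ (⇑g '' (⇑h '' A))) ∪ ((⇑g '' (⇑h '' A)) \ A)) < ⊤ ∧
      (μ (A \ (⇑g '' (⇑h '' A)))).toReal - (μ ((⇑g '' (⇑h '' A)) \ A)).toReal =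
        ((μ (A \ (⇑g '' A))).toReal - (μ ((⇑g '' A) \ A)).toReal) +
          ((μ (A \ (⇑h '' A))).toReal - (μ ((⇑h '' A) \ A)).toReal) := by
  have hhAmeas : MeasurableSet (⇑h '' A) := img_meas h hA
  have hgAmeas : MeasurableSet (⇑g '' A) := img_meas g hA
  have hghA : MeasurableSet (⇑g '' (⇑h '' A)) := img_meas g hhAmeas
  -- J(g A, g h A) data equals J(A, h A) data
  have ed1 : μ ((⇑g '' A) \ (⇑g '' (⇑h '' A))) = μ (A \ (⇑h '' A)) := by
    rw [← image_diff g.injective, img_measure g hg (hA.diff hhAmeas)]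
  have ed2 : μ ((⇑g '' (⇑h '' A)) \ (⇑g '' A)) = μ ((⇑h '' A) \ A) := by
    rw [← image_diff g.injective, img_measure g hg (hhAmeas.diff hA)]
  have h2 : μ (((⇑g '' A) \ (⇑g '' (⇑h '' A))) ∪ ((⇑g '' (⇑h '' A)) \ (⇑g '' A))) < ⊤ := by
    calc μ (((⇑g '' A) \ (⇑g '' (⇑h '' A))) ∪ ((⇑g '' (⇑h '' A)) \ (⇑g '' A)))
        ≤ μ ((⇑g '' A) \ (⇑g '' (⇑h '' A))) + μ ((⇑g '' (⇑h '' A)) \ (⇑g '' A)) :=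
          measure_union_le _ _
      _ = μ (A \ (⇑h '' A)) + μ ((⇑h '' A) \ A) := by rw [ed1, ed2]
      _ < ⊤ := by
          refine ENNReal.add_lt_top.2 ⟨?_, ?_⟩
          · exact lt_of_le_of_lt (measure_mono subset_union_left) hhA
          · exact lt_of_le_of_lt (measure_mono subset_union_right) hhA
  obtain ⟨hfin, heq⟩ := Jcocycle μ hA hgAmeas hghA hgA h2
  refine ⟨hfin, ?_⟩
  rw [heq, ed1, ed2]
end

section
/- Let μ be a measure on a measurable space M and suppose A is a measurable set which is the disjoint union of measurable sets N, B₁, …, B_m. Let f, g be measurable bijections of M with measurable inverses such that all the sets f⁻¹(N) Δ g⁻¹(N) and f⁻¹(B_i) Δ g⁻¹(B_i) have finite μ-measure. Then μ(f⁻¹(A) Δ g⁻¹(A)) < ∞ and J(f⁻¹(A), g⁻¹(A)) = J(f⁻¹(N), g⁻¹(N)) + Σ_{i=1}^m J(f⁻¹(B_i), g⁻¹(B_i)), where J(X,Y) = μ(X \ Y) - μ(Y \ X). -/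
open MeasureTheory Set

section Aux

variable {M : Type*} [MeasurableSpace M] (μ : Measure M)

lemma aux_integrable_ind {s : Set M} (hs : MeasurableSet s) (hfin : μ s < ⊤) :
    Integrable (s.indicator (1 : M → ℝ)) μ := by
  rw [integrable_indicator_iff hs]
  exact integrableOn_const hfin.ne

lemma aux_ind_sub {X Y : Set M} (x : M) :
    X.indicator (1 : M → ℝ) x - Y.indicator 1 x
      = (X \ Y).indicator (1 : M → ℝ) x - (Y \ X).indicator 1 x := by
  by_cases hX : x ∈ X <;> by_cases hY : x ∈ Y <;>
    simp [Set.indicator_apply, hX, hY]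

lemma aux_integrable {X Y : Set M} (hX : MeasurableSet X) (hY : MeasurableSet Y)
    (hfin : μ ((X \ Y) ∪ (Y \ X)) < ⊤) :
    Integrable (fun x => X.indicator (1 : M → ℝ) x - Y.indicator 1 x) μ := by
  have h1 : μ (X \ Y) < ⊤ :=
    lt_of_le_of_lt (measure_mono Set.subset_union_left) hfin
  have h2 : μ (Y \ X) < ⊤ :=
    lt_of_le_of_lt (measure_mono Set.subset_union_right) hfin
  have : (fun x => X.indicator (1 : M → ℝ) x - Y.indicator 1 x)
      = fun x => (X \ Y).indicator (1 : M → ℝ) x - (Y \ X).indicator 1 x := by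
    funext x; exact aux_ind_sub x
  rw [this]
  exact (aux_integrable_ind μ (hX.diff hY) h1).sub (aux_integrable_ind μ (hY.diff hX) h2)

lemma aux_J {X Y : Set M} (hX : MeasurableSet X) (hY : MeasurableSet Y)
    (hfin : μ ((X \ Y) ∪ (Y \ X)) < ⊤) :
    ∫ x, (X.indicator (1 : M → ℝ) x - Y.indicator 1 x) ∂μ
      = (μ (X \ Y)).toReal - (μ (Y \ X)).toReal := by
  have h1 : μ (X \ Y) < ⊤ :=
    lt_of_le_of_lt (measure_mono Set.subset_union_left) hfin
  have h2 : μ (Y \ X) < ⊤ :=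
    lt_of_le_of_lt (measure_mono Set.subset_union_right) hfin
  calc ∫ x, (X.indicator (1 : M → ℝ) x - Y.indicator 1 x) ∂μ
      = ∫ x, ((X \ Y).indicator (1 : M → ℝ) x - (Y \ X).indicator 1 x) ∂μ := by
        congr 1; funext x; exact aux_ind_sub x
    _ = (∫ x, (X \ Y).indicator (1 : M → ℝ) x ∂μ)
          - ∫ x, (Y \ X).indicator (1 : M → ℝ) x ∂μ :=
        integral_sub (aux_integrable_ind μ (hX.diff hY) h1)
          (aux_integrable_ind μ (hY.diff hX) h2)
    _ = (μ (X \ Y)).toReal - (μ (Y \ X)).toReal := by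
        rw [integral_indicator_one (hX.diff hY), integral_indicator_one (hY.diff hX)]; rfl

lemma aux_ind_iUnion {ι : Type*} [Fintype ι] (C : ι → Set M)
    (hd : Pairwise (Function.onFun Disjoint C)) (x : M) :
    (⋃ i, C i).indicator (1 : M → ℝ) x = ∑ i, (C i).indicator 1 x := by
  by_cases hx : x ∈ ⋃ i, C i
  · obtain ⟨i, hi⟩ := Set.mem_iUnion.1 hx
    rw [Set.indicator_of_mem hx, Finset.sum_eq_single i]
    · simp [Set.indicator_of_mem hi]
    · intro j _ hj
      have : x ∉ C j := fun hxj =>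
        (hd hj).le_bot (⟨hxj, hi⟩ : x ∈ C j ⊓ C i)
      simp [Set.indicator_of_notMem this]
    · simp
  · rw [Set.indicator_of_notMem hx]
    refine (Finset.sum_eq_zero fun i _ => ?_).symm
    exact Set.indicator_of_notMem (fun h => hx (Set.mem_iUnion.2 ⟨i, h⟩)) _

end Aux

theorem stmt18 {M : Type*} [MeasurableSpace M] (μ : MeasureTheory.Measure M)
    (m : ℕ) (N : Set M) (B : Fin m → Set M) (A : Set M)
    (hN : MeasurableSet N) (hB : ∀ i, MeasurableSet (B i))
    (hA : A = N ∪ ⋃ i, B i)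
    (hNB : ∀ i, Disjoint N (B i))
    (hBB : Pairwise fun i j => Disjoint (B i) (B j))
    (f g : M ≃ᵐ M)
    (hfinN : μ ((⇑f ⁻¹' N \ ⇑g ⁻¹' N) ∪ (⇑g ⁻¹' N \ ⇑f ⁻¹' N)) < ⊤)
    (hfinB : ∀ i, μ ((⇑f ⁻¹' B i \ ⇑g ⁻¹' B i) ∪ (⇑g ⁻¹' B i \ ⇑f ⁻¹' B i)) < ⊤) :
    μ ((⇑f ⁻¹' A \ ⇑g ⁻¹' A) ∪ (⇑g ⁻¹' A \ ⇑f ⁻¹' A)) < ⊤ ∧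
      (μ (⇑f ⁻¹' A \ ⇑g ⁻¹' A)).toReal - (μ (⇑g ⁻¹' A \ ⇑f ⁻¹' A)).toReal =
        ((μ (⇑f ⁻¹' N \ ⇑g ⁻¹' N)).toReal - (μ (⇑g ⁻¹' N \ ⇑f ⁻¹' N)).toReal) +
          ∑ i : Fin m,
            ((μ (⇑f ⁻¹' B i \ ⇑g ⁻¹' B i)).toReal -
              (μ (⇑g ⁻¹' B i \ ⇑f ⁻¹' B i)).toReal) := by
  classical
  -- index all pieces by Option (Fin m)
  set C : Option (Fin m) → Set M := fun o => o.elim N B with hC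
  have hCmeas : ∀ o, MeasurableSet (C o) := by rintro (_ | i); exacts [hN, hB i]
  have hCd : Pairwise (Function.onFun Disjoint C) := by
    rintro (_ | i) (_ | j) hij
    · exact absurd rfl hij
    · exact hNB j
    · exact (hNB i).symm
    · exact hBB (fun h => hij (by rw [h]))
  have hAC : A = ⋃ o, C o := by
    rw [hA]
    ext x
    simp only [Set.mem_union, Set.mem_iUnion]
    constructor
    · rintro (h | ⟨i, h⟩); exacts [⟨none, h⟩, ⟨some i, h⟩]
    · rintro ⟨(_ | i), h⟩; exacts [Or.inl h, Or.inr ⟨i, h⟩]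
  have hCfin : ∀ o, μ ((⇑f ⁻¹' C o \ ⇑g ⁻¹' C o) ∪ (⇑g ⁻¹' C o \ ⇑f ⁻¹' C o)) < ⊤ := by
    rintro (_ | i); exacts [hfinN, hfinB i]
  -- preimages commute with the union
  have hfA : ⇑f ⁻¹' A = ⋃ o, ⇑f ⁻¹' C o := by rw [hAC, Set.preimage_iUnion]
  have hgA : ⇑g ⁻¹' A = ⋃ o, ⇑g ⁻¹' C o := by rw [hAC, Set.preimage_iUnion]
  have hdf : Pairwise (Function.onFun Disjoint fun o => ⇑f ⁻¹' C o) :=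
    fun i j hij => Disjoint.preimage _ (hCd hij)
  have hdg : Pairwise (Function.onFun Disjoint fun o => ⇑g ⁻¹' C o) :=
    fun i j hij => Disjoint.preimage _ (hCd hij)
  -- finiteness
  have hsub : (⇑f ⁻¹' A \ ⇑g ⁻¹' A) ∪ (⇑g ⁻¹' A \ ⇑f ⁻¹' A) ⊆
      ⋃ o, ((⇑f ⁻¹' C o \ ⇑g ⁻¹' C o) ∪ (⇑g ⁻¹' C o \ ⇑f ⁻¹' C o)) := by
    rw [hfA, hgA]
    rintro x (⟨hxf, hxg⟩ | ⟨hxg, hxf⟩)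
    · obtain ⟨o, ho⟩ := Set.mem_iUnion.1 hxf
      exact Set.mem_iUnion.2 ⟨o, Or.inl ⟨ho, fun h => hxg (Set.mem_iUnion.2 ⟨o, h⟩)⟩⟩
    · obtain ⟨o, ho⟩ := Set.mem_iUnion.1 hxg
      exact Set.mem_iUnion.2 ⟨o, Or.inr ⟨ho, fun h => hxf (Set.mem_iUnion.2 ⟨o, h⟩)⟩⟩
  have hfin : μ ((⇑f ⁻¹' A \ ⇑g ⁻¹' A) ∪ (⇑g ⁻¹' A \ ⇑f ⁻¹' A)) < ⊤ := by
    refine lt_of_le_of_lt ((measure_mono hsub).trans (measure_iUnion_le _)) ?_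
    rw [tsum_fintype]
    exact ENNReal.sum_lt_top.2 fun o _ => hCfin o
  refine ⟨hfin, ?_⟩
  -- measurability of preimages
  have hfmeas : ∀ o, MeasurableSet (⇑f ⁻¹' C o) := fun o => f.measurable (hCmeas o)
  have hgmeas : ∀ o, MeasurableSet (⇑g ⁻¹' C o) := fun o => g.measurable (hCmeas o)
  have hfAmeas : MeasurableSet (⇑f ⁻¹' A) := by rw [hfA]; exact .iUnion hfmeas
  have hgAmeas : MeasurableSet (⇑g ⁻¹' A) := by rw [hgA]; exact .iUnion hgmeas
  -- main computation via integrals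
  have key : ∫ x, ((⇑f ⁻¹' A).indicator (1 : M → ℝ) x - (⇑g ⁻¹' A).indicator 1 x) ∂μ
      = ∑ o : Option (Fin m),
          ∫ x, ((⇑f ⁻¹' C o).indicator (1 : M → ℝ) x - (⇑g ⁻¹' C o).indicator 1 x) ∂μ := by
    rw [← integral_finset_sum]
    · congr 1
      funext x
      rw [hfA, hgA, aux_ind_iUnion _ hdf x, aux_ind_iUnion _ hdg x, Finset.sum_sub_distrib]
    · exact fun o _ => aux_integrable μ (hfmeas o) (hgmeas o) (hCfin o)
  rw [aux_J μ hfAmeas hgAmeas hfin] at key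
  have keyr : ∀ o, ∫ x, ((⇑f ⁻¹' C o).indicator (1 : M → ℝ) x
      - (⇑g ⁻¹' C o).indicator 1 x) ∂μ
      = (μ (⇑f ⁻¹' C o \ ⇑g ⁻¹' C o)).toReal - (μ (⇑g ⁻¹' C o \ ⇑f ⁻¹' C o)).toReal :=
    fun o => aux_J μ (hfmeas o) (hgmeas o) (hCfin o)
  simp_rw [keyr] at key
  rw [key, Fintype.sum_option]; rfl
end
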